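/- Let p be prime, q = p^r, and 0 ≤ a < q - 1. For every integer b with 0 ≤ b ≤ q - 1, ∑_{u = max(a-b, 0)}^{q-1-b} C(u + b, a) ≡ -C(b, a+1) (mod p). -/

import Mathlib

/-- Let `p` be prime, `q = p^r`, `0 ≤ a < q - 1`. For every `b ≤ q - 1`,
`∑_{u = max(a-b,0)}^{q-1-b} C(u + b, a) ≡ -C(b, a+1) (mod p)`. -/
theorem stmt_13 (p r : ℕ) (hp : p.Prime) (q : ℕ) (hq : q = p ^ r)
    (a : ℕ) (ha : a < q - 1) (b : ℕ) (hb : b ≤ q - 1) :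
    (∑ u ∈ Finset.Icc (a - b) (q - 1 - b), ((u + b).choose a : ℤ))
      ≡ -(b.choose (a + 1) : ℤ) [ZMOD (p : ℤ)] := by
  have hq2 : 2 ≤ q := by omega
  have hreidx : ∑ u ∈ Finset.Icc (a - b) (q - 1 - b), (u + b).choose a
      = ∑ m ∈ Finset.Icc (a - b + b) (q - 1 - b + b), m.choose a := by
    rw [← Finset.map_add_right_Icc, Finset.sum_map]
    rfl
  have hqb : q - 1 - b + b = q - 1 := by omega
  have hnat : (∑ u ∈ Finset.Icc (a - b) (q - 1 - b), (u + b).choose a)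
      + b.choose (a + 1) = q.choose (a + 1) := by
    rw [hreidx, hqb]
    rcases le_or_gt b a with h | h
    · have : a - b + b = a := by omega
      rw [this, Nat.choose_eq_zero_of_lt (by omega), add_zero]
      have := Nat.sum_Icc_choose (q - 1) a
      rwa [show q - 1 + 1 = q by omega] at this
    · have : a - b + b = b := by omega
      rw [this]
      have hsplit : (∑ m ∈ Finset.Ico a b, m.choose a)
          + ∑ m ∈ Finset.Ico b q, m.choose a = ∑ m ∈ Finset.Ico a q, m.choose a :=
        Finset.sum_Ico_consecutive _ h.le (by omega)
      have e1 : Finset.Ico b q = Finset.Icc b (q - 1) := by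
        rw [← Finset.Ico_add_one_right_eq_Icc]; congr 1; omega
      have e2 : Finset.Ico a q = Finset.Icc a (q - 1) := by
        rw [← Finset.Ico_add_one_right_eq_Icc]; congr 1; omega
      have e3 : Finset.Ico a b = Finset.Icc a (b - 1) := by
        rw [← Finset.Ico_add_one_right_eq_Icc]; congr 1; omega
      rw [e1, e2, e3] at hsplit
      have h1 := Nat.sum_Icc_choose (q - 1) a
      have h2 := Nat.sum_Icc_choose (b - 1) a
      rw [show q - 1 + 1 = q by omega] at h1
      rw [show b - 1 + 1 = b by omega] at h2
      omega
  have hdvd : (p : ℤ) ∣ (q.choose (a + 1) : ℤ) := by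
    exact_mod_cast Int.natCast_dvd_natCast.mpr
      (hq ▸ Nat.Prime.dvd_choose_pow hp (Nat.succ_ne_zero a) (by omega))
  have : (∑ u ∈ Finset.Icc (a - b) (q - 1 - b), ((u + b).choose a : ℤ))
      = (q.choose (a + 1) : ℤ) - (b.choose (a + 1) : ℤ) := by
    have := congrArg (Nat.cast : ℕ → ℤ) hnat
    push_cast at this
    linarith
  rw [this]
  have h0 : (q.choose (a + 1) : ℤ) ≡ 0 [ZMOD (p : ℤ)] := (Int.modEq_zero_iff_dvd).mpr hdvd
  simpa using h0.sub (Int.ModEq.refl (b.choose (a + 1) : ℤ))
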